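/- If X is a set, then its lifting L(X) ordered by l ⊑ m := (isdefined(l) → l = m) is a subsingleton-complete poset with least element: every family u : P → L(X) indexed by a proposition P has a least upper bound, given by (Σ (p : P), isdefined(u_p), (p,d) ↦ value(u_p)(d)). -/
import Mathlib


/-- The lifting of a type: pairs of a proposition and a value function. -/
def Lift (X : Type) : Type := Σ P : Prop, (P → X)

/-- The least element of the lifting. -/
def liftBot (X : Type) : Lift X := ⟨False, fun h => h.elim⟩

/-- The unit of the lifting monad. -/
def liftEta {X : Type} (x : X) : Lift X := ⟨True, fun _ => x⟩

/-- The order on the lifting: `l ⊑ m` iff `l` defined implies `l = m`. -/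
def LiftLE {X : Type} (l m : Lift X) : Prop := l.1 → l = m

/-- Kleisli extension of `f : X → Lift Y`. -/
noncomputable def kext {X Y : Type} (f : X → Lift Y) (l : Lift X) : Lift Y :=
  ⟨∃ p : l.1, (f (l.2 p)).1, fun h => (f (l.2 h.choose)).2 h.choose_spec⟩

/-- A type is a set if its identity types are propositions. -/
def IsSet (X : Type) : Prop := ∀ (x y : X) (p q : x = y), p = q

/-- Directedness of a family in the lifting, w.r.t. `LiftLE`. -/
def LDir {X I : Type} (u : I → Lift X) : Prop :=
  Nonempty I ∧ ∀ i j : I, ∃ k : I, LiftLE (u i) (u k) ∧ LiftLE (u j) (u k)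

/-- Least upper bounds in the lifting, w.r.t. `LiftLE`. -/
def LIsLUB {X I : Type} (u : I → Lift X) (d : Lift X) : Prop :=
  (∀ i, LiftLE (u i) d) ∧ ∀ e : Lift X, (∀ i, LiftLE (u i) e) → LiftLE d e

lemma lift_ext {X : Type} {l m : Lift X} (h1 : l.1 ↔ m.1)
    (h2 : ∀ a b, l.2 a = m.2 b) : l = m := by
  obtain ⟨P, f⟩ := l
  obtain ⟨Q, g⟩ := m
  have hPQ : P = Q := propext h1
  subst hPQ
  have : f = g := funext fun a => h2 a a
  rw [this]

/-- If `X` is a set, its lifting (ordered by `LiftLE`) is a subsingleton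
complete poset with a least element: every family indexed by a proposition has
a least upper bound, with the stated definedness proposition and values. -/
theorem lift_subsingleton_complete {X : Type} (hX : IsSet X) :
    (∀ l : Lift X, LiftLE (liftBot X) l) ∧
    (∀ (P : Prop) (u : P → Lift X),
      ∃ v : Lift X, v.1 = (∃ p : P, (u p).1) ∧
        (∀ (p : P) (h : (u p).1) (q : v.1), v.2 q = (u p).2 h) ∧
        (∀ p : P, LiftLE (u p) v) ∧
        (∀ e : Lift X, (∀ p : P, LiftLE (u p) e) → LiftLE v e)) := by
  refine ⟨fun l hl => hl.elim, fun P u => ?_⟩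
  have huu : ∀ p q : P, u p = u q := fun p q => by
    have : p = q := rfl
    rw [this]
  refine ⟨⟨∃ p : P, (u p).1, fun q => (u q.choose).2 q.choose_spec⟩, rfl, ?_, ?_, ?_⟩
  · intro p h q
    have h1 : u q.choose = u p := huu _ _
    cases h1
    rfl
  · intro p h
    refine lift_ext ⟨fun h' => ⟨p, h'⟩, fun ⟨q, hq⟩ => (huu p q) ▸ hq⟩ ?_
    intro a b
    have h1 : u p = u b.choose := huu _ _
    cases h1
    rfl
  · intro e he hv
    obtain ⟨p, hp⟩ := hv
    have h1 : u p = e := he p hp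
    refine lift_ext ?_ ?_
    · exact ⟨fun ⟨q, hq⟩ => h1 ▸ (huu p q ▸ hq), fun h' => ⟨p, h1 ▸ h'⟩⟩
    · intro a b
      have h2 : u a.choose = e := (huu a.choose p).trans h1
      cases h2
      rfl
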